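/- arXiv:2002.09596 — 3 statements merged into one kernel-verified Lean document; each statement's English description precedes it below -/
import Mathlib

section
/- Let R be a Noetherian ring and M a finitely generated R-module. If 0 → F → M → I → 0 is a short exact sequence of R-modules with F finitely generated free and I an ideal of R with grade(I) > 2, then the sequence splits, so M ≅ F ⊕ I. -/
/-- `grade I ≥ k`: there is a regular sequence of length `k` contained in `I`. -/
def hasRegularSeqOfLength {R : Type*} [CommRing R] (I : Ideal R) (k : ℕ) : Prop :=
  ∃ rs : List R, rs.length = k ∧ (∀ r ∈ rs, r ∈ I) ∧ RingTheory.Sequence.IsRegular R rs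

open RingTheory.Sequence Submodule Pointwise

lemma pairsup {R : Type*} [CommRing R] (a b : R) :
    Ideal.span {a, b} = Ideal.span {a} ⊔ Ideal.span {b} := by
  rw [← Set.singleton_union, Ideal.span_union]

lemma extract {R : Type*} [CommRing R] {a b c : R}
    (h : RingTheory.Sequence.IsRegular R [a, b, c]) :
    (∀ y : R, a * y = 0 → y = 0) ∧
    (∀ y : R, b * y ∈ Ideal.span {a} → y ∈ Ideal.span {a}) ∧
    (∀ y : R, c * y ∈ Ideal.span {a, b} → y ∈ Ideal.span {a, b}) := by
  have hspan : ∀ r : R, (r • ⊤ : Submodule R R) = Ideal.span {r} := fun r => by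
    rw [← Submodule.ideal_span_singleton_smul, smul_eq_mul, Ideal.mul_top]
  have hw := h.toIsWeaklyRegular
  rw [isWeaklyRegular_cons_iff] at hw
  obtain ⟨ha, hw⟩ := hw
  rw [isWeaklyRegular_cons_iff] at hw
  obtain ⟨hb, hw⟩ := hw
  rw [isWeaklyRegular_cons_iff] at hw
  obtain ⟨hc, -⟩ := hw
  refine ⟨fun y hy => ha (by simpa [smul_eq_mul] using hy), fun y hy => ?_, fun y hy => ?_⟩
  · have := mem_of_isSMulRegular_quotient_of_smul_mem hb
      (x := y) (by simpa [hspan, smul_eq_mul] using hy)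
    rwa [hspan] at this
  · set N₁ : Submodule R R := a • ⊤ with hN₁
    have key : ∀ z : R, (Submodule.Quotient.mk z : R ⧸ N₁) ∈ (b • ⊤ : Submodule R (R ⧸ N₁))
        ↔ z ∈ Ideal.span {a, b} := by
      intro z
      have h1 : (b • ⊤ : Submodule R (R ⧸ N₁)) = Submodule.map N₁.mkQ (b • ⊤ : Submodule R R) := by
        rw [← Submodule.ideal_span_singleton_smul, ← Submodule.ideal_span_singleton_smul,
          Submodule.map_smul'', Submodule.map_top, Submodule.range_mkQ]
      rw [h1, ← Submodule.mkQ_apply, ← Submodule.mem_comap, Submodule.comap_map_mkQ,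
        hspan b]
      rw [hN₁, hspan a, ← pairsup]
    have := mem_of_isSMulRegular_quotient_of_smul_mem hc
      (x := (Submodule.Quotient.mk y : R ⧸ N₁)) (by
        rw [← Submodule.Quotient.mk_smul, key, smul_eq_mul]; exact hy)
    rw [key] at this
    exact this

/-- a Bourbaki sequence `0 → F → M → I → 0` with `grade I > 2` splits,
so `M ≅ F ⊕ I`. -/
theorem stmt0 {R M F : Type*} [CommRing R] [IsNoetherianRing R]
    [AddCommGroup M] [Module R M] [Module.Finite R M]
    [AddCommGroup F] [Module R F] [Module.Free R F] [Module.Finite R F]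
    (I : Ideal R) (f : F →ₗ[R] M) (g : M →ₗ[R] I)
    (hf : Function.Injective f) (hg : Function.Surjective g)
    (hex : LinearMap.range f = LinearMap.ker g)
    (hgrade : hasRegularSeqOfLength I 3) :
    (∃ s : I →ₗ[R] M, g ∘ₗ s = LinearMap.id) ∧ Nonempty (M ≃ₗ[R] F × I) := by

  classical
  obtain ⟨rs, hlen, hmem, hreg⟩ := hgrade
  rcases rs with _ | ⟨a, _ | ⟨b, _ | ⟨c, _ | ⟨d, t⟩⟩⟩⟩ <;> simp only [List.length] at hlen <;>
    [skip; skip; skip; skip; omega] <;> [omega; omega; omega; skip]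
  have haI : a ∈ I := hmem a (by simp)
  have hbI : b ∈ I := hmem b (by simp)
  have hcI : c ∈ I := hmem c (by simp)
  obtain ⟨haR, hbmod, hcmod⟩ := extract hreg
  -- basis of F
  let ι := Module.Free.ChooseBasisIndex R F
  let e : Module.Basis ι R F := Module.Free.chooseBasis R F
  -- coordinates
  let κ : F → ι → R := fun w i => e.equivFun w i
  have hκa : ∀ (r : R) (w : F) (i : ι), κ (r • w) i = r * κ w i := by
    intro r w i; simp [κ, smul_eq_mul]
  have hκs : ∀ (w w' : F) (i : ι), κ (w - w') i = κ w i - κ w' i := by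
    intro w w' i; simp [κ]
  have hκinj : ∀ w w' : F, (∀ i, κ w i = κ w' i) → w = w' := by
    intro w w' h
    have : e.equivFun w = e.equivFun w' := funext h
    exact e.equivFun.injective this
  -- a is regular on F
  have haF : ∀ u : F, a • u = 0 → u = 0 := by
    intro u hu
    have h0 : ∀ i, κ u i = κ (0 : F) i := by
      intro i
      have := congrArg (fun w => κ w i) hu
      simp only [hκa] at this
      simp only [map_zero, κ] at this ⊢
      exact haR _ this
    simpa using hκinj u 0 h0
  -- a is regular on M
  have haM : ∀ m : M, a • m = 0 → m = 0 := by
    intro m hm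
    have h1 : g m = 0 := by
      have : a • g m = 0 := by rw [← map_smul, hm, map_zero]
      have h2 : a * ((g m : I) : R) = 0 := by
        have := congrArg (fun x : I => (x : R)) this
        simpa [smul_eq_mul] using this
      exact Subtype.ext (haR _ h2)
    have : m ∈ LinearMap.ker g := h1
    rw [← hex] at this
    obtain ⟨u, rfl⟩ := this
    have : f (a • u) = 0 := by rw [map_smul, hm]
    have : a • u = 0 := hf (by simpa using this)
    rw [haF u this, map_zero]
  have hau : ∀ m₁ m₂ : M, a • m₁ = a • m₂ → m₁ = m₂ := by
    intro m₁ m₂ h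
    have : a • (m₁ - m₂) = 0 := by rw [smul_sub, h, sub_self]
    have := haM _ this
    exact sub_eq_zero.mp this
  -- preimages of a, b, c
  obtain ⟨mA, hmA⟩ := hg ⟨a, haI⟩
  obtain ⟨mB, hmB⟩ := hg ⟨b, hbI⟩
  obtain ⟨mC, hmC⟩ := hg ⟨c, hcI⟩
  -- the map h₀ : M → M, m ↦ (g m) • mA - a • m, lands in range f
  set h₀ : M →ₗ[R] M :=
    (LinearMap.toSpanSingleton R M mA ∘ₗ (I.subtype ∘ₗ g)) - a • LinearMap.id with hh₀def
  have hh₀ : ∀ m : M, h₀ m = ((g m : I) : R) • mA - a • m := by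
    intro m; simp [hh₀def, LinearMap.toSpanSingleton_apply]
  have hgker : ∀ m : M, g m = 0 → m ∈ LinearMap.range f := by
    intro m hm; rw [hex]; exact hm
  have hfker : ∀ u : F, g (f u) = 0 := by
    intro u
    have : f u ∈ LinearMap.ker g := by rw [← hex]; exact ⟨u, rfl⟩
    exact this
  have hrange : ∀ m : M, h₀ m ∈ LinearMap.range f := by
    intro m
    apply hgker
    rw [hh₀, map_sub, map_smul, map_smul, hmA]
    apply Subtype.ext
    push_cast [smul_eq_mul]
    ring
  -- ψ₀ : M → F with f (ψ₀ m) = h₀ m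
  let eF := LinearEquiv.ofInjective f hf
  let ψ₀ : M →ₗ[R] F := eF.symm.toLinearMap ∘ₗ (h₀.codRestrict (LinearMap.range f) hrange)
  have hψ₀ : ∀ m : M, f (ψ₀ m) = h₀ m := by
    intro m
    show f (eF.symm ⟨h₀ m, hrange m⟩) = h₀ m
    have := eF.apply_symm_apply ⟨h₀ m, hrange m⟩
    have h2 := congrArg (fun x : LinearMap.range f => (x : M)) this
    simpa [eF, LinearEquiv.ofInjective_apply] using h2
  -- key bilinear identity
  have hkey : ∀ m m' : M, ∃ w : F,
      ((g m' : I) : R) • ψ₀ m - ((g m : I) : R) • ψ₀ m' = a • w := by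
    intro m m'
    set z : M := ((g m : I) : R) • m' - ((g m' : I) : R) • m with hz
    have hgz : g z = 0 := by
      rw [hz, map_sub, map_smul, map_smul]
      apply Subtype.ext
      push_cast [smul_eq_mul]
      ring
    obtain ⟨w, hw⟩ := hgker z hgz
    refine ⟨w, hf ?_⟩
    rw [map_sub, map_smul, map_smul, hψ₀, hψ₀, map_smul, hw, hh₀, hh₀, hz]
    module
  -- coordinates of ψ₀ mB lie in (a, b)
  have hwb : ∀ i : ι, ∃ α β : R, α * a + β * b = κ (ψ₀ mB) i := by
    intro i
    obtain ⟨w0, hw0⟩ := hkey mB mC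
    rw [hmB, hmC] at hw0
    have hco := congrArg (fun w => κ w i) hw0
    simp only [hκs, hκa] at hco
    have hmem2 : c * κ (ψ₀ mB) i ∈ Ideal.span {a, b} := by
      rw [Ideal.mem_span_pair]
      exact ⟨κ w0 i, κ (ψ₀ mC) i, by
        push_cast at hco
        linear_combination -hco⟩
    exact Ideal.mem_span_pair.mp (hcmod _ hmem2)
  choose α β hαβ using hwb
  set u : F := e.equivFun.symm β with hu
  have hκu : ∀ i, κ u i = β i := by
    intro i
    show e.equivFun (e.equivFun.symm β) i = β i
    rw [e.equivFun.apply_symm_apply]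
  -- main divisibility claim
  have hC : ∀ m : M, ∃ t : F, ψ₀ m - ((g m : I) : R) • u = a • t := by
    intro m
    obtain ⟨w1, hw1⟩ := hkey m mB
    rw [hmB] at hw1
    have hcoords : ∀ i, ∃ γ : R, γ * a = κ (ψ₀ m - ((g m : I) : R) • u) i := by
      intro i
      have h1 := congrArg (fun w => κ w i) hw1
      simp only [hκs, hκa] at h1
      push_cast at h1
      have hmem3 : b * κ (ψ₀ m - ((g m : I) : R) • u) i ∈ Ideal.span {a} := by
        rw [Ideal.mem_span_singleton']
        refine ⟨κ w1 i + ((g m : I) : R) * α i, ?_⟩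
        rw [hκs, hκa, hκu]
        linear_combination -h1 + ((g m : I) : R) * hαβ i
      exact Ideal.mem_span_singleton'.mp (hbmod _ hmem3)
    choose γ hγ using hcoords
    refine ⟨e.equivFun.symm γ, hκinj _ _ fun i => ?_⟩
    rw [hκa]
    show κ _ i = a * e.equivFun (e.equivFun.symm γ) i
    rw [e.equivFun.apply_symm_apply, ← hγ i, mul_comm]
  -- division: for every x ∈ I, x • (mA - f u) is divisible by a
  have hdiv : ∀ x : I, ∃ m₂ : M, a • m₂ = (x : R) • (mA - f u) := by
    intro x
    obtain ⟨m, hm⟩ := hg x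
    obtain ⟨t, ht⟩ := hC m
    refine ⟨m + f t, ?_⟩
    have h2 : f (a • t) = f (ψ₀ m) - ((g m : I) : R) • f u := by
      rw [← ht, map_sub, map_smul]
    rw [hψ₀, hh₀] at h2
    rw [smul_add, ← map_smul, h2, hm]
    module
  -- the splitting map
  let sfun : I → M := fun x => (hdiv x).choose
  have hsfun : ∀ x : I, a • sfun x = (x : R) • (mA - f u) := fun x => (hdiv x).choose_spec
  let s : I →ₗ[R] M :=
    { toFun := sfun
      map_add' := by
        intro x y
        apply hau
        rw [hsfun, smul_add, hsfun, hsfun]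
        push_cast
        rw [add_smul]
      map_smul' := by
        intro r x
        apply hau
        rw [hsfun, RingHom.id_apply, smul_comm, hsfun]
        push_cast
        rw [smul_eq_mul, mul_smul] }
  have hs : ∀ x : I, g (s x) = x := by
    intro x
    have hsx : a • s x = (x : R) • (mA - f u) := hsfun x
    have h1 : a • g (s x) = (x : R) • g mA - (x : R) • g (f u) := by
      rw [← map_smul, hsx, smul_sub, map_sub, map_smul, map_smul]
    rw [hfker u, smul_zero, sub_zero, hmA] at h1
    have h2 := congrArg (fun y : I => (y : R)) h1
    simp only [SetLike.val_smul, smul_eq_mul] at h2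
    have h3 := haR (((g (s x) : I) : R) - (x : R)) (by linear_combination h2)
    exact Subtype.ext (sub_eq_zero.mp h3)
  refine ⟨⟨s, LinearMap.ext hs⟩, ?_⟩
  -- build the equivalence M ≃ F × I
  set p : M →ₗ[R] M := LinearMap.id - s ∘ₗ g with hp
  have hpm : ∀ m : M, p m = m - s (g m) := by
    intro m; simp [hp]
  have hprange : ∀ m : M, p m ∈ LinearMap.range f := by
    intro m
    apply hgker
    rw [hpm, map_sub, hs, sub_self]
  let q : M →ₗ[R] F := eF.symm.toLinearMap ∘ₗ (p.codRestrict (LinearMap.range f) hprange)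
  have hq : ∀ m : M, f (q m) = p m := by
    intro m
    show f (eF.symm ⟨p m, hprange m⟩) = p m
    have h4 := eF.apply_symm_apply ⟨p m, hprange m⟩
    have h5 := congrArg (fun y : LinearMap.range f => (y : M)) h4
    simpa [eF, LinearEquiv.ofInjective_apply] using h5
  let fwd : M →ₗ[R] F × I := q.prod g
  let bwd : F × I →ₗ[R] M := f ∘ₗ LinearMap.fst R F I + s ∘ₗ LinearMap.snd R F I
  have hbwd : ∀ (v : F) (x : I), bwd (v, x) = f v + s x := by
    intro v x; simp [bwd]
  refine ⟨LinearEquiv.ofLinear fwd bwd ?_ ?_⟩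
  · apply LinearMap.ext
    rintro ⟨v, x⟩
    rw [LinearMap.comp_apply, hbwd, LinearMap.id_apply]
    have hgpart : g (f v + s x) = x := by
      rw [map_add, hfker, hs, zero_add]
    have hqpart : q (f v + s x) = v := by
      apply hf
      rw [hq, hpm, hgpart, add_sub_cancel_right]
    show (q (f v + s x), g (f v + s x)) = (v, x)
    rw [hgpart, hqpart]
  · apply LinearMap.ext
    intro m
    rw [LinearMap.comp_apply, LinearMap.id_apply]
    show bwd (q m, g m) = m
    rw [hbwd, hq, hpm, sub_add_cancel]
end

section
/- Let R be a Noetherian ring such that R_p is Gorenstein for every p ∈ Ass(R), and let M be a finitely generated R-module. Then M is torsionfree if and only if there exists an injective R-module homomorphism from M into a finitely generated free R-module, and this holds if and only if the canonical evaluation map M → M** is injective. -/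
/-- A module is torsionfree if the canonical map `M → Q(R) ⊗_R M` is injective. -/
def IsTorsionFreeModule (R M : Type*) [CommRing R] [AddCommGroup M] [Module R M] : Prop :=
  Function.Injective (LocalizedModule.mkLinearMap (nonZeroDivisors R) M)

/-- `R` is generically Gorenstein: `R_p` is Gorenstein (equivalently, an Artinian
Gorenstein, i.e. Noetherian self-injective, local ring) for all `p ∈ Ass R`. -/
def GenericallyGorenstein (R : Type*) [CommRing R] : Prop :=
  ∀ p : Ideal R, ∀ hp : IsAssociatedPrime p R,
    haveI : p.IsPrime := hp.isPrime
    IsNoetherianRing (Localization.AtPrime p) ∧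
      Module.Injective (Localization.AtPrime p) (Localization.AtPrime p)

open Submodule

section AssFinite

variable {R : Type*} [CommRing R] {M : Type*} [AddCommGroup M] [Module R M]

lemma StmtAux.smul_sub_eq_zero_iff (N : Submodule R M) (a : R) (z : N) :
    a • z = 0 ↔ a • (z : M) = 0 := by
  rw [Subtype.ext_iff, coe_smul, ZeroMemClass.coe_zero]

lemma StmtAux.isAssociatedPrime_iff' [IsNoetherianRing R] {I : Ideal R} :
    IsAssociatedPrime I M ↔ I.IsPrime ∧ ∃ x : M, I = (R ∙ x).annihilator := by
  simp only [isAssociatedPrime_iff, bot_colon']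

/-- Associated primes of a cyclic module whose annihilator is prime. -/
lemma StmtAux.ass_cyclic [IsNoetherianRing R] (x : M) (hp : ((R ∙ x).annihilator).IsPrime) :
    associatedPrimes R (R ∙ x : Submodule R M) ⊆ {(R ∙ x).annihilator} := by
  rintro q hq'
  obtain ⟨hq, z, rfl⟩ := StmtAux.isAssociatedPrime_iff'.mp hq'
  obtain ⟨r, hr⟩ := Submodule.mem_span_singleton.mp z.2
  have hzM : (z : M) ≠ 0 := by
    intro h
    apply hq.ne_top
    rw [Ideal.eq_top_iff_one, Submodule.mem_annihilator_span_singleton, one_smul]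
    exact ZeroMemClass.coe_eq_zero.mp h
  have hrp : r ∉ (R ∙ x).annihilator := by
    rw [Submodule.mem_annihilator_span_singleton, hr]
    exact fun h => hzM h
  have : (R ∙ z).annihilator = (R ∙ x).annihilator := by
    ext a
    simp only [Submodule.mem_annihilator_span_singleton, StmtAux.smul_sub_eq_zero_iff]
    constructor
    · intro h
      have h2 : (a * r) • x = 0 := by rw [mul_smul, hr]; exact h
      rcases hp.mem_or_mem (Submodule.mem_annihilator_span_singleton x (a*r) |>.mpr h2) with
        h' | h'
      · exact (Submodule.mem_annihilator_span_singleton x a).mp h'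
      · exact absurd h' hrp
    · intro h
      rw [← hr, smul_comm, h, smul_zero]
  simp [this]

/-- `Ass M ⊆ Ass N ∪ Ass (M/N)`. -/
lemma StmtAux.ass_union [IsNoetherianRing R] (N : Submodule R M) :
    associatedPrimes R M ⊆ associatedPrimes R N ∪ associatedPrimes R (M ⧸ N) := by
  rintro p hp'
  obtain ⟨hp, x, rfl⟩ := StmtAux.isAssociatedPrime_iff'.mp hp'
  by_cases hcase : ∃ r : R, r • x ∈ N ∧ r • x ≠ 0
  · obtain ⟨r, hmem, hne⟩ := hcase
    left
    have hrp : r ∉ (R ∙ x).annihilator := by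
      rw [Submodule.mem_annihilator_span_singleton]; exact hne
    refine AssociatedPrimes.mem_iff.mpr (StmtAux.isAssociatedPrime_iff'.mpr ⟨hp, ⟨r • x, hmem⟩, ?_⟩)
    ext a
    simp only [Submodule.mem_annihilator_span_singleton, StmtAux.smul_sub_eq_zero_iff]
    constructor
    · intro h
      show a • (r • x) = 0
      rw [smul_comm, h, smul_zero]
    · intro h
      have h2 : (a * r) • x = 0 := by rw [mul_smul]; exact h
      rcases hp.mem_or_mem (Submodule.mem_annihilator_span_singleton x (a*r) |>.mpr h2) with
        h' | h'
      · exact (Submodule.mem_annihilator_span_singleton x a).mp h'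
      · exact absurd h' hrp
  · push_neg at hcase
    right
    refine AssociatedPrimes.mem_iff.mpr (StmtAux.isAssociatedPrime_iff'.mpr ⟨hp, N.mkQ x, ?_⟩)
    ext a
    rw [Submodule.mem_annihilator_span_singleton, Submodule.mem_annihilator_span_singleton,
      ← map_smul, Submodule.mkQ_apply, Submodule.Quotient.mk_eq_zero]
    exact ⟨fun h => by rw [h]; exact N.zero_mem, fun h => hcase a h⟩

/-- Finiteness of the set of associated primes of a finite module over a Noetherian ring. -/
lemma StmtAux.ass_finite [IsNoetherianRing R] [Module.Finite R M] :
    (associatedPrimes R M).Finite := by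
  have hNoeth : IsNoetherian R M := isNoetherian_of_isNoetherianRing_of_finite R M
  suffices H : ∀ N : Submodule R M, (associatedPrimes R (M ⧸ N)).Finite by
    have := H ⊥
    rwa [LinearEquiv.AssociatedPrimes.eq (Submodule.quotEquivOfEqBot ⊥ rfl)] at this
  have wf : WellFounded ((· > ·) : Submodule R M → Submodule R M → Prop) :=
    isNoetherian_iff.mp hNoeth
  intro N
  induction N using wf.induction with
  | _ N IH =>
  by_cases hN : N = ⊤
  · subst hN
    haveI : Subsingleton (M ⧸ (⊤ : Submodule R M)) :=
      Submodule.Quotient.subsingleton_iff.mpr rfl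
    rw [associatedPrimes.eq_empty_of_subsingleton]
    exact Set.finite_empty
  · haveI : Nontrivial (M ⧸ N) :=
      Submodule.Quotient.nontrivial_iff.mpr hN
    obtain ⟨p, hp'⟩ := associatedPrimes.nonempty R (M ⧸ N)
    obtain ⟨hprime, xb, hxb⟩ := StmtAux.isAssociatedPrime_iff'.mp hp'
    obtain ⟨x, rfl⟩ := N.mkQ_surjective xb
    have hxbne : N.mkQ x ≠ 0 := by
      intro h
      apply hprime.ne_top
      rw [hxb, h]
      simp [Submodule.annihilator_bot]
    set N' := N ⊔ (R ∙ x) with hN'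
    have hlt : N < N' := by
      rw [lt_iff_le_and_ne]
      refine ⟨le_sup_left, fun h => hxbne ?_⟩
      have hx : x ∈ N := by
        rw [h]; exact Submodule.mem_sup_right (Submodule.mem_span_singleton_self x)
      rw [Submodule.mkQ_apply, Submodule.Quotient.mk_eq_zero]
      exact hx
    have hmap : Submodule.map N.mkQ N' = (R ∙ N.mkQ x) := by
      rw [hN', Submodule.map_sup, Submodule.map_span, Set.image_singleton,
        Submodule.mkQ_map_self, bot_sup_eq]
    have key := StmtAux.ass_union (R := R) (M := M ⧸ N) (R ∙ N.mkQ x)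
    apply Set.Finite.subset _ key
    apply Set.Finite.union
    · refine Set.Finite.subset (Set.finite_singleton p) ?_
      have h2 := StmtAux.ass_cyclic (N.mkQ x) (hxb ▸ hprime)
      rw [← hxb] at h2
      exact h2
    · have e := Submodule.quotientQuotientEquivQuotient N N' le_sup_left
      rw [← hmap, LinearEquiv.AssociatedPrimes.eq e]
      exact IH N' hlt

end AssFinite

section Easy

variable {R M : Type*} [CommRing R] [AddCommGroup M] [Module R M]

lemma StmtAux.mk_one_eq_zero_iff (S : Submonoid R) (x : M) :
    (LocalizedModule.mk x (1 : S) = 0) ↔ ∃ u : S, u • x = 0 := by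
  rw [show (0 : LocalizedModule S M) = LocalizedModule.mk 0 1 from (LocalizedModule.zero_mk 1).symm,
    LocalizedModule.mk_eq]
  simp

lemma StmtAux.isTorsionFreeModule_iff :
    IsTorsionFreeModule R M ↔ ∀ x : M, (∃ u : nonZeroDivisors R, u • x = 0) → x = 0 := by
  rw [IsTorsionFreeModule, injective_iff_map_eq_zero]
  constructor
  · intro h x hx
    exact h x ((StmtAux.mk_one_eq_zero_iff _ x).mpr hx)
  · intro h x hx
    rw [LocalizedModule.mkLinearMap_apply, StmtAux.mk_one_eq_zero_iff] at hx
    exact h x hx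

lemma StmtAux.tf_of_embed {m : ℕ} (f : M →ₗ[R] (Fin m → R)) (hf : Function.Injective f) :
    IsTorsionFreeModule R M := by
  rw [StmtAux.isTorsionFreeModule_iff]
  rintro x ⟨u, hu⟩
  apply hf
  rw [map_zero]
  funext i
  have hu' : (u : R) • x = 0 := hu
  have : (u : R) * f x i = 0 := by
    have h2 : f ((u : R) • x) i = 0 := by rw [hu', map_zero]; rfl
    rwa [map_smul] at h2
  exact mem_nonZeroDivisors_iff_right.mp u.2 _ (by rwa [mul_comm])

lemma StmtAux.tf_of_eval (h : Function.Injective (Module.Dual.eval R M)) :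
    IsTorsionFreeModule R M := by
  rw [StmtAux.isTorsionFreeModule_iff]
  rintro x ⟨u, hu⟩
  apply h
  rw [map_zero]
  ext ψ
  simp only [Module.Dual.eval_apply, LinearMap.zero_apply]
  have hu' : (u : R) • x = 0 := hu
  have : (u : R) * ψ x = 0 := by rw [← smul_eq_mul, ← map_smul, hu', map_zero]
  exact mem_nonZeroDivisors_iff_right.mp u.2 _ (by rwa [mul_comm])

lemma StmtAux.embed_of_eval [IsNoetherianRing R] [Module.Finite R M]
    (h : Function.Injective (Module.Dual.eval R M)) :
    ∃ (m : ℕ) (f : M →ₗ[R] (Fin m → R)), Function.Injective f := by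
  obtain ⟨n, π, hπ⟩ := Module.Finite.exists_fin' R M
  haveI : Module.Finite R (Module.Dual R M) := by
    refine Module.Finite.of_injective
      ((LinearEquiv.piRing R R (Fin n) R).toLinearMap ∘ₗ π.dualMap) ?_
    exact (LinearEquiv.piRing R R (Fin n) R).injective.comp
      (LinearMap.dualMap_injective_of_surjective hπ)
  obtain ⟨k, ψ, hψ⟩ := Module.Finite.exists_fin (R := R) (M := Module.Dual R M)
  refine ⟨k, LinearMap.pi (fun i => ψ i), ?_⟩
  rw [injective_iff_map_eq_zero]
  intro x hx
  apply h
  rw [map_zero]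
  ext φ
  simp only [Module.Dual.eval_apply, LinearMap.zero_apply]
  have hmem : φ ∈ Submodule.span R (Set.range ψ) := hψ ▸ Submodule.mem_top
  induction hmem using Submodule.span_induction with
  | mem y hy =>
    obtain ⟨i, rfl⟩ := hy
    exact congrFun hx i
  | zero => rfl
  | add y z _ _ hy hz => simp [LinearMap.add_apply, hy, hz]
  | smul a y _ hy => simp [LinearMap.smul_apply, hy]

end Easy

section Hard

variable {R M : Type*} [CommRing R] [IsNoetherianRing R] [AddCommGroup M]
  [Module R M] [Module.Finite R M]

lemma StmtAux.eval_inj_of_tf (hR : GenericallyGorenstein R)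
    (hM : IsTorsionFreeModule R M) : Function.Injective (Module.Dual.eval R M) := by
  rw [injective_iff_map_eq_zero]
  intro x hx
  by_contra hx0
  -- choose an associated prime `q` of `R` containing the annihilator of `x`
  obtain ⟨s, hs⟩ := Set.Finite.exists_finset_coe (StmtAux.ass_finite (R := R) (M := R))
  have hsub : ((R ∙ x).annihilator : Set R) ⊆ ⋃ p ∈ (s : Set (Ideal R)), ((id p : Ideal R) : Set R) := by
    rw [hs]
    show ((R ∙ x).annihilator : Set R) ⊆ ⋃ p ∈ associatedPrimes R R, (p : Set R)
    rw [biUnion_associatedPrimes_eq_zero_divisors]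
    intro r hr
    rw [SetLike.mem_coe, Submodule.mem_annihilator_span_singleton] at hr
    have hrn : r ∉ nonZeroDivisors R := by
      intro hrS
      exact hx0 ((StmtAux.isTorsionFreeModule_iff.mp hM) x ⟨⟨r, hrS⟩, hr⟩)
    rw [mem_nonZeroDivisors_iff_right] at hrn
    push_neg at hrn
    obtain ⟨w, hw1, hw2⟩ := hrn
    exact ⟨w, hw2, by rw [smul_eq_mul, mul_comm]; exact hw1⟩
  have hprimes : ∀ p ∈ s, p ≠ (⊥ : Ideal R) → p ≠ (⊥ : Ideal R) → (id p : Ideal R).IsPrime := by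
    intro p hp _ _
    have : IsAssociatedPrime p R := by
      rw [← AssociatedPrimes.mem_iff, ← hs]; exact_mod_cast hp
    exact this.isPrime
  obtain ⟨q, hqs, hq⟩ := (Ideal.subset_union_prime (⊥ : Ideal R) (⊥ : Ideal R) hprimes).mp hsub
  have hq_ass : IsAssociatedPrime q R := by
    rw [← AssociatedPrimes.mem_iff, ← hs]; exact_mod_cast hqs
  haveI hq_prime : q.IsPrime := hq_ass.isPrime
  set S := q.primeCompl with hS
  -- the image of x in the localized module is nonzero
  let x' : LocalizedModule S M := LocalizedModule.mkLinearMap S M x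
  have hx' : x' ≠ 0 := by
    intro h
    rw [show x' = LocalizedModule.mk x 1 from rfl, StmtAux.mk_one_eq_zero_iff] at h
    obtain ⟨u, hu⟩ := h
    have hu' : (u : R) • x = 0 := hu
    exact u.2 (hq (Submodule.mem_annihilator_span_singleton x (u : R) |>.mpr hu'))
  -- socle element of R_q
  obtain ⟨y, hy⟩ := (StmtAux.isAssociatedPrime_iff'.mp hq_ass).2
  set z : (Localization.AtPrime q) := algebraMap R (Localization.AtPrime q) y with hzdef
  have hz : z ≠ 0 := by
    intro h
    obtain ⟨m, hm⟩ := (IsLocalization.map_eq_zero_iff S (Localization.AtPrime q) y).mp h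
    apply m.2
    rw [hy]
    exact Submodule.mem_annihilator_span_singleton y (m : R) |>.mpr (by rw [smul_eq_mul]; exact hm)
  -- anything annihilating x' annihilates z
  have hz_ann : ∀ a : (Localization.AtPrime q), a • x' = 0 → a * z = 0 := by
    intro a ha
    obtain ⟨⟨r, t⟩, hrt : IsLocalization.mk' (Localization.AtPrime q) r t = a⟩ := IsLocalization.mk'_surjective S a
    have h1 : (algebraMap R (Localization.AtPrime q) r) • x' = 0 := by
      rw [← IsLocalization.mk'_spec (Localization.AtPrime q) r t, mul_comm, mul_smul, hrt, ha, smul_zero]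
    have h2 : r • x' = 0 := by rwa [algebraMap_smul] at h1
    have h3 : LocalizedModule.mk (r • x) (1 : S) = 0 := by
      rw [← LocalizedModule.mkLinearMap_apply, map_smul]
      exact h2
    rw [StmtAux.mk_one_eq_zero_iff] at h3
    obtain ⟨u, hu⟩ := h3
    have hu' : ((u : R) * r) • x = 0 := by rw [mul_smul]; exact hu
    have hur : (u : R) * r ∈ q := hq (Submodule.mem_annihilator_span_singleton x _ |>.mpr hu')
    have hrq : r ∈ q := (hq_prime.mem_or_mem hur).resolve_left u.2
    have hry : r * y = 0 := by
      rw [hy] at hrq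
      have := (Submodule.mem_annihilator_span_singleton y r).mp hrq
      rwa [smul_eq_mul] at this
    have h4 : algebraMap R (Localization.AtPrime q) ↑t * (a * z) = 0 := by
      calc algebraMap R (Localization.AtPrime q) ↑t * (a * z)
          = (IsLocalization.mk' (Localization.AtPrime q) r t * algebraMap R (Localization.AtPrime q) ↑t) * z := by rw [hrt]; ring
        _ = algebraMap R (Localization.AtPrime q) r * algebraMap R (Localization.AtPrime q) y := by rw [IsLocalization.mk'_spec, hzdef]
        _ = algebraMap R (Localization.AtPrime q) (r * y) := (map_mul _ _ _).symm
        _ = 0 := by rw [hry, map_zero]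
    exact ((IsLocalization.map_units (Localization.AtPrime q) t).mul_right_eq_zero).mp h4
  -- Baer's criterion and the extension property
  have hbaer : Module.Baer (Localization.AtPrime q) (Localization.AtPrime q) := Module.Baer.of_injective (hR q hq_ass).2
  let g : Localization.AtPrime q →ₗ[(Localization.AtPrime q)] LocalizedModule S M := LinearMap.toSpanSingleton (Localization.AtPrime q) _ x'
  let ι : ((Localization.AtPrime q) ⧸ LinearMap.ker g) →ₗ[(Localization.AtPrime q)] LocalizedModule S M := (LinearMap.ker g).liftQ g le_rfl
  have hι : Function.Injective ι := by
    rw [← LinearMap.ker_eq_bot]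
    exact Submodule.ker_liftQ_eq_bot _ _ _ le_rfl
  have hker : LinearMap.ker g ≤ LinearMap.ker (LinearMap.toSpanSingleton (Localization.AtPrime q) (Localization.AtPrime q) z) := by
    intro a ha
    rw [LinearMap.mem_ker] at ha ⊢
    rw [LinearMap.toSpanSingleton_apply] at ha ⊢
    rw [smul_eq_mul]
    exact hz_ann a ha
  obtain ⟨φ, hφ⟩ := hbaer.extension_property ι hι
    ((LinearMap.ker g).liftQ (LinearMap.toSpanSingleton (Localization.AtPrime q) (Localization.AtPrime q) z) hker)
  have hφx : φ x' = z := by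
    have h5 := LinearMap.congr_fun hφ (Submodule.Quotient.mk (1 : Localization.AtPrime q))
    simp only [ι, g, LinearMap.comp_apply, Submodule.liftQ_apply,
      LinearMap.toSpanSingleton_apply, one_smul] at h5
    exact h5
  -- localize the dual
  haveI : Module.FinitePresentation R M := Module.finitePresentation_of_finite R M
  obtain ⟨⟨ψ, t⟩, hψt⟩ := IsLocalizedModule.surj S
    (IsLocalizedModule.mapExtendScalars S (LocalizedModule.mkLinearMap S M)
      (Algebra.linearMap R (Localization.AtPrime q)) (Localization.AtPrime q)) φ
  have hψx : ψ x = 0 := by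
    simpa [Module.Dual.eval_apply] using LinearMap.congr_fun hx ψ
  have h6 : (IsLocalizedModule.mapExtendScalars S (LocalizedModule.mkLinearMap S M)
      (Algebra.linearMap R (Localization.AtPrime q)) (Localization.AtPrime q)) ψ x' = 0 := by
    rw [IsLocalizedModule.mapExtendScalars_apply_apply,
      show x' = LocalizedModule.mkLinearMap S M x from rfl,
      IsLocalizedModule.map_apply, Algebra.linearMap_apply, hψx, map_zero]
  have h7 : (t : R) • φ x' = 0 := by
    have h8 := LinearMap.congr_fun hψt x'
    rw [LinearMap.smul_apply] at h8
    rw [show (t : R) • φ x' = t • φ x' from rfl, h8, h6]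
  rw [hφx, Algebra.smul_def] at h7
  exact hz (((IsLocalization.map_units (Localization.AtPrime q) t).mul_right_eq_zero).mp h7)

end Hard

/-- over a Noetherian generically Gorenstein ring, `M` is torsionfree
iff it embeds into a finitely generated free module, iff the canonical map
`M → M**` is injective. -/
theorem stmt2 {R M : Type*} [CommRing R] [IsNoetherianRing R]
    [AddCommGroup M] [Module R M] [Module.Finite R M]
    (hR : GenericallyGorenstein R) :
    (IsTorsionFreeModule R M ↔
      ∃ (m : ℕ) (f : M →ₗ[R] (Fin m → R)), Function.Injective f) ∧
    (IsTorsionFreeModule R M ↔ Function.Injective (Module.Dual.eval R M)) := by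
  constructor
  · constructor
    · intro h
      exact StmtAux.embed_of_eval (StmtAux.eval_inj_of_tf hR h)
    · rintro ⟨m, f, hf⟩
      exact StmtAux.tf_of_embed f hf
  · exact ⟨StmtAux.eval_inj_of_tf hR, StmtAux.tf_of_eval⟩
end

section
/- Let R be a Noetherian ring such that R_p is Gorenstein for every p ∈ Ass(R), and let M be a finitely generated R-module. Then M is reflexive (the canonical map M → M** is bijective) if and only if there exists an exact sequence 0 → M → F → G with F and G finitely generated free R-modules. -/
open Module LinearMap

section Helpers

variable {R : Type*} [CommRing R] {M N : Type*} [AddCommGroup M] [Module R M]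
  [AddCommGroup N] [Module R N]

/-- Naturality of the double-dual evaluation map. -/
lemma eval_naturality (j : M →ₗ[R] N) (m : M) :
    j.dualMap.dualMap (Module.Dual.eval R M m) = Module.Dual.eval R N (j m) := rfl

/-- If `M` embeds in a module with injective evaluation, its evaluation is injective. -/
lemma eval_inj_of_inj (j : M →ₗ[R] N) (hj : Function.Injective j)
    (hN : Function.Injective (Module.Dual.eval R N)) :
    Function.Injective (Module.Dual.eval R M) := by
  intro m m' h
  apply hj; apply hN
  rw [← eval_naturality, ← eval_naturality, h]

/-- A functional vanishing on the kernel of a surjection factors through it. -/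
lemma exists_comp_of_ker_le (e : M →ₗ[R] N) (he : Function.Surjective e)
    (χ : M →ₗ[R] R) (hle : LinearMap.ker e ≤ LinearMap.ker χ) :
    ∃ ψ : N →ₗ[R] R, ψ ∘ₗ e = χ := by
  refine ⟨(LinearMap.ker e).liftQ χ hle ∘ₗ (e.quotKerEquivOfSurjective he).symm.toLinearMap, ?_⟩
  ext z
  have h1 : (e.quotKerEquivOfSurjective he) (Submodule.Quotient.mk z) = e z := by
    simp [LinearMap.quotKerEquivOfSurjective, LinearMap.quotKerEquivRange]
  have h2 : (e.quotKerEquivOfSurjective he).symm (e z) = Submodule.Quotient.mk z := by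
    rw [LinearEquiv.symm_apply_eq, h1]
  simp [h2]

end Helpers

section Core

variable {R : Type*} [CommRing R] [IsNoetherianRing R]

/-- Core local extension claim: for `K ≤ F = Rᵃ` and a prime `p` such that `R_p` is
self-injective, any functional on `K` becomes, after multiplying by some `s ∉ p`,
the restriction of a functional on `F`. -/
lemma core_claim {a : ℕ} (K : Submodule R (Fin a → R)) (p : Ideal R) [p.IsPrime]
    (hinj : Module.Injective (Localization.AtPrime p) (Localization.AtPrime p))
    (ψ : Module.Dual R ↥K) :
    ∃ s ∈ p.primeCompl, s • ψ ∈ LinearMap.range K.subtype.dualMap := by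
  classical
  set S := p.primeCompl with hS
  let Rp := Localization.AtPrime p
  let mkK := LocalizedModule.mkLinearMap S ↥K
  let mkF := LocalizedModule.mkLinearMap S (Fin a → R)
  let ι := K.subtype
  let ιp := IsLocalizedModule.map S mkK mkF ι
  have hιp : Function.Injective ιp :=
    IsLocalizedModule.map_injective S mkK mkF ι K.injective_subtype
  -- lift ψ to the localized module
  let ψhat : ↥K →ₗ[R] Rp := (Algebra.linearMap R Rp) ∘ₗ ψ
  have hu : ∀ x : S, IsUnit ((algebraMap R (Module.End R Rp)) x) :=
    IsLocalizedModule.map_units (Algebra.linearMap R Rp)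
  let ψp := IsLocalizedModule.lift S mkK ψhat hu
  have hψp : ∀ m, ψp (mkK m) = ψhat m := IsLocalizedModule.lift_apply S mkK ψhat hu
  -- injectivity of Rp over itself gives an extension
  letI : Module Rp (LocalizedModule S ↥K) :=
    inferInstanceAs (Module (Localization p.primeCompl) (LocalizedModule p.primeCompl ↥K))
  letI : Module Rp (LocalizedModule S (Fin a → R)) :=
    inferInstanceAs (Module (Localization p.primeCompl) (LocalizedModule p.primeCompl (Fin a → R)))
  obtain ⟨h, hh⟩ := hinj.out (X := LocalizedModule S ↥K) (Y := LocalizedModule S (Fin a → R))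
    (ιp.extendScalarsOfIsLocalization S Rp) hιp
    (ψp.extendScalarsOfIsLocalization S Rp)
  let ξhat : (Fin a → R) →ₗ[R] Rp := (h.restrictScalars R) ∘ₗ mkF
  have hext : ∀ m : ↥K, ξhat (ι m) = ψhat m := by
    intro m
    have h1 : mkF (ι m) = ιp (mkK m) := (IsLocalizedModule.map_apply S mkK mkF ι m).symm
    have := hh (mkK m)
    simp only [LinearMap.extendScalarsOfIsLocalization_apply'] at this
    show h (mkF (ι m)) = ψhat m
    rw [h1, this, hψp]
  -- clear denominators
  obtain ⟨s, hs⟩ := IsLocalization.exist_integer_multiples_of_finite S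
    (fun i : Fin a => ξhat (Pi.single i 1))
  choose r hr using hs
  let ξ : (Fin a → R) →ₗ[R] R := ∑ i : Fin a, (r i) • LinearMap.proj i
  have hξsingle : ∀ i, ξ (Pi.single i 1) = r i := by
    intro i
    simp only [ξ, LinearMap.sum_apply, LinearMap.smul_apply, LinearMap.proj_apply,
      smul_eq_mul]
    rw [Finset.sum_eq_single i]
    · simp
    · intro j _ hj; simp [Pi.single_apply, hj]
    · simp
  have hkey : ∀ x, (Algebra.linearMap R Rp) (ξ x) = (s : R) • ξhat x := by
    have : (Algebra.linearMap R Rp) ∘ₗ ξ = ((s : R) • ξhat) := by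
      apply (Pi.basisFun R (Fin a)).ext
      intro i
      simp only [LinearMap.coe_comp, Function.comp_apply, Pi.basisFun_apply,
        LinearMap.smul_apply]
      rw [hξsingle i]
      exact hr i
    intro x
    have := congrArg (fun φ : _ →ₗ[R] Rp => φ x) this
    simpa using this
  -- the error term
  let d : ↥K →ₗ[R] R := ξ ∘ₗ ι - (s : R) • ψ
  have hd0 : ∀ m, algebraMap R Rp (d m) = 0 := by
    intro m
    simp only [d, LinearMap.sub_apply, LinearMap.coe_comp, Function.comp_apply,
      LinearMap.smul_apply, map_sub, smul_eq_mul, map_mul]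
    have h1 : algebraMap R Rp (ξ (ι m)) = (s : R) • ξhat (ι m) := hkey (ι m)
    have h2 : ξhat (ι m) = ψhat m := hext m
    have h3 : (ψhat m : Rp) = algebraMap R Rp (ψ m) := rfl
    rw [show (algebraMap R Rp) (ξ (ι m)) = (s:R) • ξhat (ι m) from h1, h2, h3,
      Algebra.smul_def]
    ring
  -- kill the error term using finiteness of K
  have : IsNoetherian R (Fin a → R) := inferInstance
  obtain ⟨n, v, hv⟩ := Module.Finite.exists_fin (R := R) (M := ↥K)
  choose t ht using fun j => (IsLocalization.map_eq_zero_iff S Rp (d (v j))).mp (hd0 (v j))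
  let tt : S := ∏ j : Fin n, t j
  have htt : ∀ j, (tt : R) * d (v j) = 0 := by
    intro j
    obtain ⟨c, hc⟩ := Finset.dvd_prod_of_mem (fun j => ((t j : R))) (Finset.mem_univ j)
    have : (tt : R) = (t j : R) * c := by
      rw [← hc]; push_cast [tt]; norm_cast
    rw [this, mul_assoc, mul_comm c, ← mul_assoc, ht j, zero_mul]
  have htd : (tt : R) • d = 0 := by
    apply LinearMap.ext_on hv
    rintro _ ⟨j, rfl⟩
    simp only [LinearMap.smul_apply, smul_eq_mul, LinearMap.zero_apply]
    exact htt j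
  refine ⟨(tt : R) * (s : R), Submonoid.mul_mem _ tt.2 s.2, ⟨(tt : R) • ξ, ?_⟩⟩
  have : (tt : R) • (ξ ∘ₗ ι) - (tt : R) • ((s : R) • ψ) = 0 := by
    refine (smul_sub (tt : R) (ξ ∘ₗ ι) ((s : R) • ψ)).symm.trans ?_
    exact htd
  ext m
  have := congrArg (fun φ : _ →ₗ[R] R => φ m) this
  simp only [LinearMap.sub_apply, LinearMap.smul_apply, LinearMap.coe_comp,
    Function.comp_apply, LinearMap.zero_apply, smul_eq_mul, sub_eq_zero] at this
  simpa [mul_assoc, mul_smul, ι] using this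

end Core

section Key

variable {R : Type*} [CommRing R] [IsNoetherianRing R]

/-- Over a Noetherian generically Gorenstein ring, the kernel of a map of finite free
modules (i.e. any second syzygy) is reflexive. -/
lemma bwd_key (hR : GenericallyGorenstein R) {a b : ℕ}
    (g : (Fin a → R) →ₗ[R] (Fin b → R)) :
    Function.Bijective (Module.Dual.eval R ↥(LinearMap.ker g)) := by
  classical
  set K := LinearMap.ker g with hK
  set ι := K.subtype with hι
  -- injectivity of ι** on double duals
  have hC : ∀ ξ' : Dual R (Dual R ↥K), ι.dualMap.dualMap ξ' = 0 → ξ' = 0 := by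
    intro ξ' h0
    have hle : LinearMap.range ι.dualMap ≤ LinearMap.ker ξ' := by
      rintro _ ⟨χ, rfl⟩
      have := congrArg (fun φ : Dual R (Dual R (Fin a → R)) => φ χ) h0
      simpa using this
    set φ : (Dual R ↥K ⧸ LinearMap.range ι.dualMap) →ₗ[R] R :=
      (LinearMap.range ι.dualMap).liftQ ξ' hle with hφdef
    suffices hφ : φ = 0 by
      ext χ
      have h1 : ξ' χ = φ (Submodule.Quotient.mk χ) := rfl
      rw [h1, hφ]
      simp
    by_contra hφ
    obtain ⟨c0, hc0⟩ : ∃ c, φ c ≠ 0 := by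
      by_contra hall
      push_neg at hall
      exact hφ (LinearMap.ext fun c => hall c)
    have : Nontrivial ↥(LinearMap.range φ) := by
      refine ⟨⟨φ c0, LinearMap.mem_range_self φ c0⟩, 0, ?_⟩
      simp only [ne_eq, Submodule.mk_eq_zero]
      exact hc0
    obtain ⟨p, hp⟩ := associatedPrimes.nonempty R ↥(LinearMap.range φ)
    have hpR : IsAssociatedPrime p R :=
      hp.map_of_injective (LinearMap.range φ).subtype (Submodule.injective_subtype _)
    haveI : p.IsPrime := hpR.isPrime
    obtain ⟨hNoeth, hInj⟩ := hR p hpR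
    obtain ⟨hp1, y, hy⟩ := isAssociatedPrime_iff.mp hp
    obtain ⟨c, hc⟩ := y.2
    obtain ⟨ψ, rfl⟩ := (LinearMap.range ι.dualMap).mkQ_surjective c
    obtain ⟨s, hsS, hmem⟩ := core_claim K p hInj ψ
    have hsc : s • ((LinearMap.range ι.dualMap).mkQ ψ) = 0 := by
      rw [← map_smul, Submodule.mkQ_apply, Submodule.Quotient.mk_eq_zero]
      exact hmem
    have hsy : s • y = 0 := by
      apply Subtype.ext
      show s • (y : R) = 0
      rw [← hc, ← map_smul, hsc, map_zero]
    have : s ∈ p := by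
      rw [hy]
      exact Submodule.mem_colon_singleton.mpr hsy
    exact hsS this
  constructor
  · exact eval_inj_of_inj ι (Submodule.injective_subtype K)
      (Module.bijective_dual_eval R (Fin a → R)).injective
  · intro ξ
    obtain ⟨f₀, hf₀⟩ :=
      (Module.bijective_dual_eval R (Fin a → R)).surjective (ι.dualMap.dualMap ξ)
    have hgι : g ∘ₗ ι = 0 := by
      refine LinearMap.ext fun m => ?_
      simp [ι, hK]
    have hker : g f₀ = 0 := by
      apply (Module.bijective_dual_eval R (Fin b → R)).injective
      rw [← eval_naturality g f₀, hf₀]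
      have hcomp : ι.dualMap ∘ₗ g.dualMap = (g ∘ₗ ι).dualMap := rfl
      have : g.dualMap.dualMap (ι.dualMap.dualMap ξ) = (g ∘ₗ ι).dualMap.dualMap ξ := by
        show ξ ∘ₗ (ι.dualMap ∘ₗ g.dualMap) = ξ ∘ₗ (g ∘ₗ ι).dualMap
        rw [hcomp]
      rw [this, hgι]
      refine LinearMap.ext fun χ => ?_
      have : (0 : (↥K →ₗ[R] (Fin b → R))).dualMap χ = 0 := by
        ext m; simp
      simp [this]
    refine ⟨⟨f₀, hker⟩, ?_⟩
    have hzero : ι.dualMap.dualMap (Module.Dual.eval R ↥K ⟨f₀, hker⟩ - ξ) = 0 := by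
      rw [map_sub, eval_naturality ι ⟨f₀, hker⟩]
      show Module.Dual.eval R (Fin a → R) f₀ - ι.dualMap.dualMap ξ = 0
      rw [hf₀, sub_self]
    have := hC _ hzero
    rwa [sub_eq_zero] at this

end Key

section Fwd

variable {R M : Type*} [CommRing R] [IsNoetherianRing R]
    [AddCommGroup M] [Module R M] [Module.Finite R M]

/-- A finitely generated reflexive module is a second syzygy. -/
lemma fwd (hbij : Function.Bijective (Module.Dual.eval R M)) :
    ∃ (a b : ℕ) (f : M →ₗ[R] (Fin a → R)) (g : (Fin a → R) →ₗ[R] (Fin b → R)),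
      Function.Injective f ∧ LinearMap.range f = LinearMap.ker g := by
  classical
  obtain ⟨n, s, hs⟩ := Module.Finite.exists_fin' R M
  have hdf : Module.Finite R (Module.Dual R M) :=
    Module.Finite.of_injective s.dualMap (LinearMap.dualMap_injective_of_surjective hs)
  obtain ⟨a, e, he⟩ := Module.Finite.exists_fin' R (Module.Dual R M)
  obtain ⟨b, q', hq'⟩ := Module.Finite.exists_fin' R ↥(LinearMap.ker e)
  set q : (Fin b → R) →ₗ[R] (Fin a → R) := (LinearMap.ker e).subtype ∘ₗ q' with hq
  have hrq : LinearMap.range q = LinearMap.ker e := by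
    rw [hq, LinearMap.range_comp, LinearMap.range_eq_top.mpr hq', Submodule.map_top,
      Submodule.range_subtype]
  set εa := (Pi.basisFun R (Fin a)).toDualEquiv with hεa
  set εb := (Pi.basisFun R (Fin b)).toDualEquiv with hεb
  refine ⟨a, b, εa.symm.toLinearMap ∘ₗ e.dualMap ∘ₗ Module.Dual.eval R M,
    εb.symm.toLinearMap ∘ₗ q.dualMap ∘ₗ εa.toLinearMap, ?_, ?_⟩
  · simp only [LinearMap.coe_comp, LinearEquiv.coe_coe]
    exact εa.symm.injective.comp
      ((LinearMap.dualMap_injective_of_surjective he).comp hbij.injective)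
  · ext x
    simp only [LinearMap.mem_range, LinearMap.mem_ker, LinearMap.coe_comp, Function.comp_apply,
      LinearEquiv.coe_coe]
    rw [show (εb.symm (q.dualMap (εa x)) = 0) ↔ q.dualMap (εa x) = 0 from
      LinearEquiv.map_eq_zero_iff _]
    constructor
    · rintro ⟨m, rfl⟩
      rw [LinearEquiv.apply_symm_apply]
      refine LinearMap.ext fun z => ?_
      have hz : q z ∈ LinearMap.ker e := hrq ▸ LinearMap.mem_range_self q z
      simp only [LinearMap.dualMap_apply', LinearMap.coe_comp, Function.comp_apply,
        LinearMap.zero_apply]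
      change (Module.Dual.eval R M m) (e (q z)) = 0
      rw [LinearMap.mem_ker.mp hz]
      simp
    · intro hx
      have hle : LinearMap.ker e ≤ LinearMap.ker (εa x) := by
        rw [← hrq]
        rintro _ ⟨z, rfl⟩
        simpa using congrArg (fun φ : _ →ₗ[R] R => φ z) hx
      obtain ⟨ψ, hψ⟩ := exists_comp_of_ker_le e he (εa x) hle
      obtain ⟨m, hm⟩ := hbij.surjective ψ
      refine ⟨m, ?_⟩
      rw [← LinearEquiv.symm_apply_apply εa x]
      congr 1
      rw [LinearMap.dualMap_apply', hm]
      exact hψ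

end Fwd

/-- over a Noetherian generically Gorenstein ring, `M` is reflexive
(the canonical map `M → M**` is bijective) iff there is an exact sequence
`0 → M → F → G` with `F`, `G` finitely generated free. -/
theorem stmt3 {R M : Type*} [CommRing R] [IsNoetherianRing R]
    [AddCommGroup M] [Module R M] [Module.Finite R M]
    (hR : GenericallyGorenstein R) :
    Function.Bijective (Module.Dual.eval R M) ↔
      ∃ (a b : ℕ) (f : M →ₗ[R] (Fin a → R)) (g : (Fin a → R) →ₗ[R] (Fin b → R)),
        Function.Injective f ∧ LinearMap.range f = LinearMap.ker g := by
  constructor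
  · exact fun hbij => fwd hbij
  · rintro ⟨a, b, f, g, hfin, hfk⟩
    haveI : Module.IsReflexive R ↥(LinearMap.ker g) := ⟨bwd_key hR g⟩
    have e : M ≃ₗ[R] ↥(LinearMap.ker g) :=
      (LinearEquiv.ofInjective f hfin).trans (LinearEquiv.ofEq _ _ hfk)
    haveI : Module.IsReflexive R M := Module.equiv e.symm
    exact Module.bijective_dual_eval R M
end
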